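/- arXiv:1310.4851 — 3 statements merged into one kernel-verified Lean document; each statement's English description precedes it below -/
import Mathlib

section
/- Let f : I → ℝ be a differentiable function on the interior I° of a real interval I ⊂ (0,∞), let a, b ∈ I with a < b, and suppose f′ is integrable on [a,b]. If |f′|^q is harmonically convex on [a,b] for some q > 1 with 1/p + 1/q = 1, then: |f(2ab/(a+b)) − (ab/(b−a))·∫_a^b f(x)/x² dx| ≤ (ab(b−a)/2)·{ C₁(0,p;a,b)^{1/p}·( (|f′(2ab/(a+b))|^q + |f′(b)|^q)/4 )^{1/q} + C₁(0,p;b,a)^{1/p}·( (|f′(2ab/(a+b))|^q + |f′(a)|^q)/4 )^{1/q} }. -/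
open MeasureTheory Set

/-- A function `g` is harmonically convex on `s` if
`g (x*y/(t*x+(1-t)*y)) ≤ t * g y + (1-t) * g x` for all `x y ∈ s`, `t ∈ [0,1]`. -/
def HarmonicallyConvexOn (s : Set ℝ) (g : ℝ → ℝ) : Prop :=
  ∀ x ∈ s, ∀ y ∈ s, ∀ t ∈ Icc (0:ℝ) 1,
    g (x * y / (t * x + (1 - t) * y)) ≤ t * g y + (1 - t) * g x

/-- `C₁(λ, p; u, ϑ) = ∫_0^{1/2} |λ-2t|^p / (tϑ+(1-t)u)^{2p} dt` from Theorem 2.3. -/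
noncomputable def C1p (lam p u v : ℝ) : ℝ :=
  ∫ t in (0:ℝ)..(1/2 : ℝ), |lam - 2 * t| ^ p / (t * v + (1 - t) * u) ^ (2 * p)

set_option maxHeartbeats 2000000 in
lemma half_bound (f' : ℝ → ℝ) (a b c d p q : ℝ) (ha : 0 < a) (hab : a < b)
    (hq : 1 < q) (hpq : 1 / p + 1 / q = 1)
    (hconv : HarmonicallyConvexOn (Icc a b) (fun x => |f' x| ^ q))
    (hmeas : AEStronglyMeasurable (fun t => f' (a * b / (t * c + (1 - t) * d)))
      (volume.restrict (Ioc (0:ℝ) (1/2))))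
    (hca : a ≤ c) (hcb : c ≤ b) (hda : a ≤ d) (hdb : d ≤ b)
    (h1 : c * d = a * b) (h2 : c + d = a + b) :
    (∫ t in (0:ℝ)..(1/2:ℝ), t * (|f' (a * b / (t * c + (1 - t) * d))| *
        (a * b * (b - a) / (t * c + (1 - t) * d) ^ 2))) ≤
      (a * b * (b - a) / 2) * (C1p 0 p d c ^ (1 / p) *
        ((|f' (2 * a * b / (a + b))| ^ q + |f' c| ^ q) / 4) ^ (1 / q)) := by
  have hb : 0 < b := ha.trans hab
  have hab2 : 0 < a + b := by linarith
  have hq0 : 0 < q := by linarith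
  have hq0' : q ≠ 0 := hq0.ne'
  -- conjugate exponent facts
  have h1q1 : 1 / q < 1 := (div_lt_one hq0).mpr hq
  have h1q0 : 0 < 1 / q := by positivity
  have h1p : 1 / p = 1 - 1 / q := by linarith
  have hp0 : 0 < 1 / p := by rw [h1p]; linarith
  have hppos : 0 < p := one_div_pos.mp hp0
  have hp : 1 < p := (div_lt_one hppos).mp (by rw [h1p]; linarith)
  have hpq' : p.HolderConjugate q := Real.holderConjugate_iff.mpr ⟨hp, by rw [← one_div, ← one_div]; exact hpq⟩
  set μ := volume.restrict (Ioc (0:ℝ) (1/2)) with hμ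
  haveI : IsFiniteMeasure μ := by
    constructor
    rw [hμ, Measure.restrict_apply_univ, Real.volume_Ioc]
    exact ENNReal.ofReal_lt_top
  set A : ℝ → ℝ := fun t => t * c + (1 - t) * d with hA
  set m : ℝ := 2 * a * b / (a + b) with hm
  have hApos : ∀ t ∈ Icc (0:ℝ) (1/2), 0 < A t := by
    intro t ht
    simp only [hA]
    have h1t : (0:ℝ) < 1 - t := by linarith [ht.2]
    nlinarith [mul_nonneg ht.1 (le_trans ha.le hca), mul_pos h1t (lt_of_lt_of_le ha hda)]
  have hAmem : ∀ t ∈ Icc (0:ℝ) (1/2), a ≤ A t ∧ A t ≤ b := by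
    intro t ht
    simp only [hA]
    have h1t : (0:ℝ) ≤ 1 - t := by linarith [ht.2]
    constructor
    · nlinarith [mul_le_mul_of_nonneg_left hca ht.1, mul_le_mul_of_nonneg_left hda h1t]
    · nlinarith [mul_le_mul_of_nonneg_left hcb ht.1, mul_le_mul_of_nonneg_left hdb h1t]
  have hm_mem : m ∈ Icc a b := by
    constructor
    · rw [hm, le_div_iff₀ hab2]; nlinarith
    · rw [hm, div_le_iff₀ hab2]; nlinarith
  have hXmem : ∀ t ∈ Icc (0:ℝ) (1/2), a * b / A t ∈ Icc a b := by
    intro t ht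
    have h0 := hApos t ht
    have hmm := hAmem t ht
    constructor
    · rw [le_div_iff₀ h0]; nlinarith [hmm.2]
    · rw [div_le_iff₀ h0]; nlinarith [hmm.1]
  -- the key convexity estimate
  set gm : ℝ := |f' m| ^ q with hgm
  set gc : ℝ := |f' c| ^ q with hgc
  have hgm0 : 0 ≤ gm := Real.rpow_nonneg (abs_nonneg _) q
  have hgc0 : 0 ≤ gc := Real.rpow_nonneg (abs_nonneg _) q
  have hcd : (c = a ∧ d = b) ∨ (c = b ∧ d = a) := by
    have h3 : (c - a) * (c - b) = 0 := by linear_combination c * h2 - h1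
    rcases mul_eq_zero.mp h3 with h | h
    · left; constructor
      · linarith
      · linarith
    · right; constructor
      · linarith
      · linarith
  have hkey : ∀ t ∈ Icc (0:ℝ) (1/2), |f' (a * b / A t)| ^ q ≤ 2 * t * gm + (1 - 2 * t) * gc := by
    intro t ht
    have hAp := hApos t ht
    have hDpos : 0 < 2 * t * c + (1 - 2 * t) * m := by
      have h1t : (0:ℝ) ≤ 1 - 2 * t := by linarith [ht.2]
      nlinarith [mul_le_mul_of_nonneg_left (le_trans hm_mem.1 le_rfl) h1t,
        mul_nonneg (by linarith [ht.1] : (0:ℝ) ≤ 2 * t) (le_trans ha.le hca),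
        mul_le_mul_of_nonneg_left hm_mem.1 h1t]
    have heq : c * m / (2 * t * c + (1 - 2 * t) * m) = a * b / A t := by
      rw [div_eq_div_iff hDpos.ne' hAp.ne']
      simp only [hm, hA]
      rcases hcd with ⟨rfl, rfl⟩ | ⟨rfl, rfl⟩
      · field_simp
        ring
      · field_simp
        ring
    have h := hconv c ⟨hca, hcb⟩ m hm_mem (2 * t) ⟨by linarith [ht.1], by linarith [ht.2]⟩
    simp only at h
    rw [heq] at h
    exact h
  -- abbreviations for Hölder
  set φ : ℝ → ℝ := fun t => 2 * t / (A t) ^ 2 with hφ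
  set ψ : ℝ → ℝ := fun t => |f' (a * b / A t)| with hψ
  have hψ_aesm : AEStronglyMeasurable ψ μ := by
    have := hmeas.norm
    refine this.congr (Filter.Eventually.of_forall fun t => ?_)
    simp [hψ, hA, Real.norm_eq_abs]
  have hφ_aesm : AEStronglyMeasurable φ μ := by
    have : Measurable φ := by
      apply Measurable.div
      · fun_prop
      · fun_prop
    exact this.aestronglyMeasurable
  have hmemIoc : ∀ᵐ t ∂μ, t ∈ Ioc (0:ℝ) (1/2) := ae_restrict_mem measurableSet_Ioc
  have hφ0 : 0 ≤ᵐ[μ] φ := by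
    filter_upwards [hmemIoc] with t ht
    exact div_nonneg (by linarith [ht.1]) (sq_nonneg _)
  have hψ0 : 0 ≤ᵐ[μ] ψ := Filter.Eventually.of_forall fun t => abs_nonneg _
  set K : ℝ := gm + gc with hK
  have hK0 : 0 ≤ K := by rw [hK]; exact add_nonneg hgm0 hgc0
  have hψq_bdd : ∀ t ∈ Ioc (0:ℝ) (1/2), ψ t ^ q ≤ K := by
    intro t ht
    have ht' : t ∈ Icc (0:ℝ) (1/2) := ⟨ht.1.le, ht.2⟩
    have h := hkey t ht'
    have h2t0 : (0:ℝ) ≤ 2 * t := by linarith [ht'.1]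
    have h2t1 : 2 * t ≤ 1 := by linarith [ht'.2]
    nlinarith
  have hψ_mem : MemLp ψ (ENNReal.ofReal q) μ := by
    refine MemLp.of_bound hψ_aesm (K ^ (1/q)) ?_
    filter_upwards [hmemIoc] with t ht
    rw [Real.norm_eq_abs, abs_abs]
    have : ψ t = (ψ t ^ q) ^ (1/q) := by
      rw [one_div, Real.rpow_rpow_inv (abs_nonneg _) hq0']
    calc |f' (a * b / A t)| = (ψ t ^ q) ^ (1/q) := this
      _ ≤ K ^ (1/q) := Real.rpow_le_rpow (Real.rpow_nonneg (abs_nonneg _) _)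
          (hψq_bdd t ht) (by positivity)
  have hφ_mem : MemLp φ (ENNReal.ofReal p) μ := by
    refine MemLp.of_bound hφ_aesm (1 / a ^ 2) ?_
    filter_upwards [hmemIoc] with t ht
    have ht' : t ∈ Icc (0:ℝ) (1/2) := ⟨ht.1.le, ht.2⟩
    have hmm := hAmem t ht'
    rw [Real.norm_eq_abs, abs_of_nonneg (div_nonneg (by linarith [ht'.1]) (sq_nonneg _))]
    exact div_le_div₀ zero_le_one (by linarith [ht'.2]) (pow_pos ha 2)
      (pow_le_pow_left₀ ha.le hmm.1 2)
  have hold := integral_mul_le_Lp_mul_Lq_of_nonneg hpq' hφ0 hψ0 hφ_mem hψ_mem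
  -- rewrite the LHS
  have hLHS : (∫ t in (0:ℝ)..(1/2:ℝ), t * (|f' (a * b / (t * c + (1 - t) * d))| *
      (a * b * (b - a) / (t * c + (1 - t) * d) ^ 2))) =
      (a * b * (b - a) / 2) * ∫ t in (0:ℝ)..(1/2:ℝ), φ t * ψ t := by
    rw [← intervalIntegral.integral_const_mul]
    apply intervalIntegral.integral_congr
    intro t _
    simp only [hφ, hψ, hA]
    ring
  rw [hLHS]
  have hN : (0:ℝ) ≤ a * b * (b - a) / 2 := by nlinarith [mul_pos ha hb]
  apply mul_le_mul_of_nonneg_left _ hN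
  rw [intervalIntegral.integral_of_le (by norm_num : (0:ℝ) ≤ 1/2)]
  refine le_trans hold ?_
  -- factor 1 : equality with C1p
  have hfac1 : (∫ t, φ t ^ p ∂μ) = C1p 0 p d c := by
    rw [C1p, intervalIntegral.integral_of_le (by norm_num : (0:ℝ) ≤ 1/2)]
    apply setIntegral_congr_fun measurableSet_Ioc
    intro t ht
    have ht' : t ∈ Icc (0:ℝ) (1/2) := ⟨ht.1.le, ht.2⟩
    have hAp := hApos t ht'
    have h2t0 : (0:ℝ) ≤ 2 * t := by linarith [ht.1]
    simp only [hφ, hA]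
    rw [Real.div_rpow h2t0 (sq_nonneg _)]
    rw [zero_sub, abs_neg, abs_of_nonneg h2t0]
    congr 1
    rw [← Real.rpow_natCast (t * c + (1 - t) * d) 2, ← Real.rpow_mul hAp.le]
    norm_num
    rfl
  have hC1p0 : 0 ≤ C1p 0 p d c := by
    rw [← hfac1]
    apply integral_nonneg_of_ae
    filter_upwards [hmemIoc] with t ht
    have h2t0 : (0:ℝ) ≤ 2 * t := by linarith [ht.1]
    exact Real.rpow_nonneg (div_nonneg h2t0 (sq_nonneg _)) p
  -- factor 2 : bound by (gm + gc)/4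
  have hfac2 : (∫ t, ψ t ^ q ∂μ) ≤ K / 4 := by
    have hint1 : IntegrableOn (fun t => ψ t ^ q) (Ioc (0:ℝ) (1/2)) volume := by
      rw [IntegrableOn, ← memLp_one_iff_integrable]
      refine MemLp.of_bound ?_ K ?_
      · exact (Real.continuous_rpow_const hq0.le).comp_aestronglyMeasurable hψ_aesm
      · filter_upwards [hmemIoc] with t ht
        rw [Real.norm_eq_abs, abs_of_nonneg (Real.rpow_nonneg (abs_nonneg _) _)]
        exact hψq_bdd t ht
    have hint2 : IntegrableOn (fun t => 2 * t * gm + (1 - 2 * t) * gc) (Ioc (0:ℝ) (1/2)) volume :=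
      (Continuous.integrableOn_Ioc (by continuity))
    have hmono := setIntegral_mono_on hint1 hint2 measurableSet_Ioc
      (fun t ht => hkey t ⟨ht.1.le, ht.2⟩)
    refine le_trans hmono ?_
    have : (∫ t in (0:ℝ)..(1/2:ℝ), (2 * t * gm + (1 - 2 * t) * gc)) = K / 4 := by
      have hder : ∀ t ∈ uIcc (0:ℝ) (1/2), HasDerivAt (fun s : ℝ => s ^ 2 * gm + (s - s ^ 2) * gc)
          (2 * t * gm + (1 - 2 * t) * gc) t := by
        intro t _
        have h1 : HasDerivAt (fun s : ℝ => s ^ 2 * gm + (s - s ^ 2) * gc)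
            ((2 * t ^ 1) * gm + (1 - 2 * t ^ 1) * gc) t := by
          exact (((hasDerivAt_pow 2 t).mul_const gm).add
            (((hasDerivAt_id t).sub (hasDerivAt_pow 2 t)).mul_const gc)).congr_deriv (by
              push_cast; ring)
        simpa using h1
      rw [intervalIntegral.integral_eq_sub_of_hasDerivAt hder
        (Continuous.intervalIntegrable (by continuity) _ _)]
      rw [hK]; norm_num; ring
    rw [intervalIntegral.integral_of_le (by norm_num : (0:ℝ) ≤ 1/2)] at this
    rw [this]
  rw [hfac1]
  apply mul_le_mul_of_nonneg_left _ (Real.rpow_nonneg hC1p0 _)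
  have hint_nonneg : 0 ≤ ∫ t, ψ t ^ q ∂μ := by
    apply integral_nonneg_of_ae
    exact Filter.Eventually.of_forall fun t => Real.rpow_nonneg (abs_nonneg _) _
  calc (∫ t, ψ t ^ q ∂μ) ^ (1/q) ≤ (K / 4) ^ (1/q) :=
        Real.rpow_le_rpow hint_nonneg hfac2 (by positivity)
    _ = ((|f' m| ^ q + |f' c| ^ q) / 4) ^ (1/q) := by rw [hK, hgm, hgc]

set_option maxHeartbeats 2000000 in
theorem cor_midpoint_holder (I : Set ℝ) (hI : I.OrdConnected) (hIpos : I ⊆ Ioi (0:ℝ))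
    (f f' : ℝ → ℝ) (a b : ℝ) (ha : a ∈ I) (hb : b ∈ I) (hab : a < b)
    (hf : ∀ x ∈ interior I, HasDerivAt f (f' x) x)
    (hint : IntervalIntegrable f' volume a b)
    (p q : ℝ) (hq : 1 < q) (hpq : 1 / p + 1 / q = 1)
    (hconv : HarmonicallyConvexOn (Icc a b) (fun x => |f' x| ^ q)) :
    |f (2 * a * b / (a + b)) - (a * b / (b - a)) * (∫ x in a..b, f x / x ^ 2)| ≤
      (a * b * (b - a) / 2) *
      (C1p (0:ℝ) p a b ^ (1 / p) *
          ((|f' (2 * a * b / (a + b))| ^ q + |f' b| ^ q) / 4) ^ (1 / q)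
        + C1p (0:ℝ) p b a ^ (1 / p) *
          ((|f' (2 * a * b / (a + b))| ^ q + |f' a| ^ q) / 4) ^ (1 / q)) := by
  have ha0 : 0 < a := hIpos ha
  have hb0 : 0 < b := hIpos hb
  have hab2 : 0 < a + b := by linarith
  have hba : 0 < b - a := sub_pos.mpr hab
  have hIcc : Icc a b ⊆ I := hI.out ha hb
  have hIoo : Ioo a b ⊆ interior I := by
    calc Ioo a b = interior (Icc a b) := interior_Icc.symm
      _ ⊆ interior I := interior_mono hIcc
  set m : ℝ := 2 * a * b / (a + b) with hm
  have hm_mem : m ∈ Ioo a b := by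
    constructor
    · rw [hm, lt_div_iff₀ hab2]; nlinarith
    · rw [hm, div_lt_iff₀ hab2]; nlinarith
  set A : ℝ → ℝ := fun t => t * a + (1 - t) * b with hA
  set X : ℝ → ℝ := fun t => a * b / A t with hX
  set V : ℝ → ℝ := fun t => a * b * (b - a) / (A t) ^ 2 with hV
  set val : ℝ → ℝ := fun t => f' (X t) * V t with hval
  have hA_mem : ∀ t ∈ Icc (0:ℝ) 1, a ≤ A t ∧ A t ≤ b := by
    intro t ht
    simp only [hA]
    constructor
    · nlinarith [ht.1, ht.2]
    · nlinarith [ht.1, ht.2]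
  have hA_pos : ∀ t ∈ Icc (0:ℝ) 1, 0 < A t := fun t ht => lt_of_lt_of_le ha0 (hA_mem t ht).1
  have hA_strict : ∀ t ∈ Ioo (0:ℝ) 1, a < A t ∧ A t < b := by
    intro t ht
    simp only [hA]
    constructor
    · nlinarith [ht.1, ht.2]
    · nlinarith [ht.1, ht.2]
  have hX_mem : ∀ t ∈ Ioo (0:ℝ) 1, X t ∈ Ioo a b := by
    intro t ht
    have h1 := hA_strict t ht
    have h0 : 0 < A t := lt_trans ha0 h1.1
    simp only [hX]
    constructor
    · rw [lt_div_iff₀ h0]; nlinarith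
    · rw [div_lt_iff₀ h0]; nlinarith
  have hX_deriv : ∀ t ∈ Ioo (0:ℝ) 1, HasDerivAt X (V t) t := by
    intro t ht
    have h0 : A t ≠ 0 := (hA_pos t (Ioo_subset_Icc_self ht)).ne'
    have hAd : HasDerivAt A (a - b) t := by
      have h := ((hasDerivAt_id t).mul_const a).add
        (((hasDerivAt_const t (1:ℝ)).sub (hasDerivAt_id t)).mul_const b)
      rw [hA]
      refine h.congr_deriv ?_
      ring
    have h := (hasDerivAt_const t (a * b)).div hAd h0
    simp only [hX, hV]
    refine h.congr_deriv ?_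
    ring
  have hF_deriv : ∀ t ∈ Ioo (0:ℝ) 1, HasDerivAt (fun s => f (X s)) (val t) t := by
    intro t ht
    have hfd := hf (X t) (hIoo (hX_mem t ht))
    have h := hfd.comp t (hX_deriv t ht)
    exact h
  have hX_inj : InjOn X (Ioo (0:ℝ) 1) := by
    intro s hs t ht hst
    have h0s : 0 < A s := hA_pos s (Ioo_subset_Icc_self hs)
    have h0t : 0 < A t := hA_pos t (Ioo_subset_Icc_self ht)
    simp only [hX] at hst
    rw [div_eq_div_iff h0s.ne' h0t.ne'] at hst
    have hab0 : a * b ≠ 0 := by positivity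
    have hAeq : A s = A t := by
      apply mul_left_cancel₀ hab0
      linarith [hst]
    simp only [hA] at hAeq
    have hne : a - b ≠ 0 := by intro h; apply absurd hab; intro _; linarith [sub_eq_zero.mp h]
    have : s * (a - b) = t * (a - b) := by linarith
    exact mul_right_cancel₀ hne this
  have hX_img : X '' Ioo (0:ℝ) 1 = Ioo a b := by
    apply Subset.antisymm
    · rintro y ⟨t, ht, rfl⟩
      exact hX_mem t ht
    · intro y hy
      have hy0 : 0 < y := lt_trans ha0 hy.1
      refine ⟨(b - a * b / y) / (b - a), ⟨?_, ?_⟩, ?_⟩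
      · apply div_pos _ hba
        have : a * b / y < b := by rw [div_lt_iff₀ hy0]; nlinarith [hy.1]
        linarith
      · rw [div_lt_one hba]
        have : a < a * b / y := by rw [lt_div_iff₀ hy0]; nlinarith [hy.2]
        linarith
      · simp only [hX, hA]
        have hAval : (b - a * b / y) / (b - a) * a + (1 - (b - a * b / y) / (b - a)) * b
            = a * b / y := by field_simp; ring
        rw [hAval]
        field_simp
  -- integrability of val on [0,1]
  have hf'_int : IntegrableOn f' (Ioo a b) volume :=
    ((intervalIntegrable_iff_integrableOn_Ioc_of_le hab.le).mp hint).mono_set Ioo_subset_Ioc_self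
  have himg := (integrableOn_image_iff_integrableOn_abs_deriv_smul measurableSet_Ioo
      (fun t ht => (hX_deriv t ht).hasDerivWithinAt) hX_inj f').mp (by rw [hX_img]; exact hf'_int)
  have hVpos : ∀ t ∈ Icc (0:ℝ) 1, 0 < V t := by
    intro t ht
    have h0 := hA_pos t ht
    simp only [hV]
    apply div_pos (by nlinarith [mul_pos ha0 hb0]) (pow_pos h0 2)
  have hval_int : IntervalIntegrable val volume 0 1 := by
    rw [intervalIntegrable_iff_integrableOn_Ioc_of_le (by norm_num : (0:ℝ) ≤ 1)]
    refine IntegrableOn.congr_set_ae ?_ Ioo_ae_eq_Ioc.symm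
    refine himg.congr_fun ?_ measurableSet_Ioo
    intro t ht
    have hV0 := hVpos t (Ioo_subset_Icc_self ht)
    simp only [hval, smul_eq_mul]
    rw [abs_of_pos hV0]
    ring
  -- the continuous primitive
  set G : ℝ → ℝ := fun t => f m + ∫ s in (1/2:ℝ)..t, val s with hG
  have hG_cont : ContinuousOn G (Icc (0:ℝ) 1) := by
    have h12 : (1/2:ℝ) ∈ uIcc (0:ℝ) 1 := by
      rw [uIcc_of_le (by norm_num : (0:ℝ) ≤ 1)]
      norm_num
    have hc := intervalIntegral.continuousOn_primitive_interval' hval_int h12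
    rw [uIcc_of_le (by norm_num : (0:ℝ) ≤ 1)] at hc
    simp only [hG]
    exact continuousOn_const.add hc
  have hGF : ∀ t ∈ Ioo (0:ℝ) 1, G t = f (X t) := by
    intro t ht
    have hsub : uIcc (1/2:ℝ) t ⊆ Ioo (0:ℝ) 1 :=
      Set.ordConnected_Ioo.uIcc_subset (by norm_num) ht
    have hFTC := intervalIntegral.integral_eq_sub_of_hasDerivAt
      (f := fun s => f (X s)) (f' := val)
      (fun s hs => hF_deriv s (hsub hs))
      (hval_int.mono_set (by
        rw [uIcc_of_le (by norm_num : (0:ℝ) ≤ 1)]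
        exact hsub.trans Ioo_subset_Icc_self))
    have hX12 : X (1/2:ℝ) = m := by
      simp only [hX, hA, hm]
      rw [div_eq_div_iff (by linarith) hab2.ne']
      ring
    simp only [hG]
    rw [hFTC]
    show f m + (f (X t) - f (X (1/2))) = f (X t)
    rw [hX12]
    ring
  have hG_deriv : ∀ t ∈ Ioo (0:ℝ) 1, HasDerivAt G (val t) t := by
    intro t ht
    apply (hF_deriv t ht).congr_of_eventuallyEq
    filter_upwards [isOpen_Ioo.mem_nhds ht] with s hs
    exact hGF s hs
  -- restricted integrabilities
  have hvi1 : IntervalIntegrable val volume 0 (1/2) := hval_int.mono_set (by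
    rw [uIcc_of_le (by norm_num : (0:ℝ) ≤ 1/2), uIcc_of_le (by norm_num : (0:ℝ) ≤ 1)]
    exact Icc_subset_Icc le_rfl (by norm_num))
  have hvi2 : IntervalIntegrable val volume (1/2) 1 := hval_int.mono_set (by
    rw [uIcc_of_le (by norm_num : (1/2:ℝ) ≤ 1), uIcc_of_le (by norm_num : (0:ℝ) ≤ 1)]
    exact Icc_subset_Icc (by norm_num) le_rfl)
  have hGi1 : IntervalIntegrable G volume 0 (1/2) := by
    apply ContinuousOn.intervalIntegrable
    apply hG_cont.mono
    rw [uIcc_of_le (by norm_num : (0:ℝ) ≤ 1/2)]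
    exact Icc_subset_Icc le_rfl (by norm_num)
  have hGi2 : IntervalIntegrable G volume (1/2) 1 := by
    apply ContinuousOn.intervalIntegrable
    apply hG_cont.mono
    rw [uIcc_of_le (by norm_num : (1/2:ℝ) ≤ 1)]
    exact Icc_subset_Icc (by norm_num) le_rfl
  have htv1 : IntervalIntegrable (fun t => t * val t) volume 0 (1/2) :=
    hvi1.continuousOn_mul continuousOn_id
  have htv2 : IntervalIntegrable (fun t => (t - 1) * val t) volume (1/2) 1 :=
    hvi2.continuousOn_mul (continuousOn_id.sub continuousOn_const)
  -- integration by parts on the two halves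
  have hpart1 : (∫ t in (0:ℝ)..(1/2:ℝ), (G t + t * val t)) = (1/2) * G (1/2) := by
    have hcont : ContinuousOn (fun t => t * G t) (Icc (0:ℝ) (1/2)) :=
      continuousOn_id.mul (hG_cont.mono (Icc_subset_Icc le_rfl (by norm_num)))
    have hder : ∀ t ∈ Ioo (0:ℝ) (1/2:ℝ),
        HasDerivWithinAt (fun s => s * G s) (G t + t * val t) (Ioi t) t := by
      intro t ht
      have ht' : t ∈ Ioo (0:ℝ) 1 := ⟨ht.1, by linarith [ht.2]⟩
      have h := (hasDerivAt_id t).mul (hG_deriv t ht')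
      have h2 : HasDerivAt (fun s => s * G s) (G t + t * val t) t := by
        refine h.congr_deriv ?_
        simp only [id_eq]
        ring
      exact h2.hasDerivWithinAt
    have := intervalIntegral.integral_eq_sub_of_hasDeriv_right_of_le
      (by norm_num : (0:ℝ) ≤ 1/2) hcont hder (hGi1.add htv1)
    rw [this]
    ring
  have hpart2 : (∫ t in (1/2:ℝ)..(1:ℝ), (G t + (t - 1) * val t)) = (1/2) * G (1/2) := by
    have hcont : ContinuousOn (fun t => (t - 1) * G t) (Icc (1/2:ℝ) 1) :=
      (continuousOn_id.sub continuousOn_const).mul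
        (hG_cont.mono (Icc_subset_Icc (by norm_num) le_rfl))
    have hder : ∀ t ∈ Ioo (1/2:ℝ) (1:ℝ),
        HasDerivWithinAt (fun s => (s - 1) * G s) (G t + (t - 1) * val t) (Ioi t) t := by
      intro t ht
      have ht' : t ∈ Ioo (0:ℝ) 1 := ⟨by linarith [ht.1], ht.2⟩
      have h := ((hasDerivAt_id t).sub (hasDerivAt_const t (1:ℝ))).mul (hG_deriv t ht')
      have h2 : HasDerivAt (fun s => (s - 1) * G s) (G t + (t - 1) * val t) t := by
        refine h.congr_deriv ?_
        simp only [Pi.sub_apply, id_eq]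
        ring
      exact h2.hasDerivWithinAt
    have := intervalIntegral.integral_eq_sub_of_hasDeriv_right_of_le
      (by norm_num : (1/2:ℝ) ≤ 1) hcont hder (hGi2.add htv2)
    rw [this]
    ring
  -- the midpoint identity
  have hadd1 : (∫ t in (0:ℝ)..(1/2:ℝ), (G t + t * val t))
      = (∫ t in (0:ℝ)..(1/2:ℝ), G t) + ∫ t in (0:ℝ)..(1/2:ℝ), t * val t :=
    intervalIntegral.integral_add hGi1 htv1
  have hadd2 : (∫ t in (1/2:ℝ)..(1:ℝ), (G t + (t - 1) * val t))
      = (∫ t in (1/2:ℝ)..(1:ℝ), G t) + ∫ t in (1/2:ℝ)..(1:ℝ), (t - 1) * val t :=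
    intervalIntegral.integral_add hGi2 htv2
  have hsplit : (∫ t in (0:ℝ)..(1/2:ℝ), G t) + (∫ t in (1/2:ℝ)..(1:ℝ), G t)
      = ∫ t in (0:ℝ)..(1:ℝ), G t :=
    intervalIntegral.integral_add_adjacent_intervals hGi1 hGi2
  have hiden : G (1/2) - (∫ t in (0:ℝ)..(1:ℝ), G t)
      = (∫ t in (0:ℝ)..(1/2:ℝ), t * val t) + ∫ t in (1/2:ℝ)..(1:ℝ), (t - 1) * val t := by
    linarith [hpart1, hpart2, hadd1, hadd2, hsplit]
  -- identification of the sub-integral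
  have hsub_int : (a * b / (b - a)) * (∫ x in a..b, f x / x ^ 2) = ∫ t in (0:ℝ)..(1:ℝ), G t := by
    have h1 : (∫ x in a..b, f x / x ^ 2) = ∫ x in Ioo a b, f x / x ^ 2 := by
      rw [intervalIntegral.integral_of_le hab.le]
      exact integral_Ioc_eq_integral_Ioo
    have h2 := integral_image_eq_integral_abs_deriv_smul measurableSet_Ioo
      (fun t ht => (hX_deriv t ht).hasDerivWithinAt) hX_inj (fun x => f x / x ^ 2)
    rw [hX_img] at h2
    have h3 : (∫ t in Ioo (0:ℝ) 1, |V t| • (f (X t) / (X t) ^ 2))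
        = ∫ t in Ioo (0:ℝ) 1, ((b - a) / (a * b)) * G t := by
      apply setIntegral_congr_fun measurableSet_Ioo
      intro t ht
      have hV0 := hVpos t (Ioo_subset_Icc_self ht)
      have hA0 := hA_pos t (Ioo_subset_Icc_self ht)
      show |V t| • (f (X t) / X t ^ 2) = (b - a) / (a * b) * G t
      rw [smul_eq_mul, abs_of_pos hV0, ← hGF t ht]
      simp only [hV, hX]
      field_simp
    have h4 : (∫ t in Ioo (0:ℝ) 1, ((b - a) / (a * b)) * G t)
        = ((b - a) / (a * b)) * ∫ t in Ioo (0:ℝ) 1, G t := integral_const_mul _ _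
    have h5 : (∫ t in Ioo (0:ℝ) 1, G t) = ∫ t in (0:ℝ)..(1:ℝ), G t := by
      rw [intervalIntegral.integral_of_le (by norm_num : (0:ℝ) ≤ 1)]
      exact integral_Ioc_eq_integral_Ioo.symm
    rw [h1, h2, h3, h4, h5]
    rw [← mul_assoc]
    rw [show a * b / (b - a) * ((b - a) / (a * b)) = 1 by field_simp]
    ring
  -- endpoint argument facts
  have hf'deriv : ∀ y ∈ Ioo a b, f' y = deriv f y := fun y hy => ((hf y (hIoo hy)).deriv).symm
  have harg1 : ∀ t ∈ Ioc (0:ℝ) (1/2), a * b / (t * a + (1 - t) * b) ∈ Ioo a b := by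
    intro t ht
    have hd1 : a < t * a + (1 - t) * b := by nlinarith [ht.1, ht.2]
    have hd2 : t * a + (1 - t) * b < b := by nlinarith [ht.1, ht.2]
    have hd0 : 0 < t * a + (1 - t) * b := lt_trans ha0 hd1
    constructor
    · rw [lt_div_iff₀ hd0]; nlinarith
    · rw [div_lt_iff₀ hd0]; nlinarith
  have harg2 : ∀ t ∈ Ioc (0:ℝ) (1/2), a * b / (t * b + (1 - t) * a) ∈ Ioo a b := by
    intro t ht
    have hd1 : a < t * b + (1 - t) * a := by nlinarith [ht.1, ht.2]
    have hd2 : t * b + (1 - t) * a < b := by nlinarith [ht.1, ht.2]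
    have hd0 : 0 < t * b + (1 - t) * a := lt_trans ha0 hd1
    constructor
    · rw [lt_div_iff₀ hd0]; nlinarith
    · rw [div_lt_iff₀ hd0]; nlinarith
  have hmeas1 : AEStronglyMeasurable (fun t => f' (a * b / (t * a + (1 - t) * b)))
      (volume.restrict (Ioc (0:ℝ) (1/2))) := by
    have hmb : Measurable fun t : ℝ => deriv f (a * b / (t * a + (1 - t) * b)) := by
      apply (measurable_deriv f).comp
      fun_prop
    refine hmb.aestronglyMeasurable.congr ?_
    filter_upwards [ae_restrict_mem measurableSet_Ioc] with t ht
    exact (hf'deriv _ (harg1 t ht)).symm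
  have hmeas2 : AEStronglyMeasurable (fun t => f' (a * b / (t * b + (1 - t) * a)))
      (volume.restrict (Ioc (0:ℝ) (1/2))) := by
    have hmb : Measurable fun t : ℝ => deriv f (a * b / (t * b + (1 - t) * a)) := by
      apply (measurable_deriv f).comp
      fun_prop
    refine hmb.aestronglyMeasurable.congr ?_
    filter_upwards [ae_restrict_mem measurableSet_Ioc] with t ht
    exact (hf'deriv _ (harg2 t ht)).symm
  -- the main identity
  have hmain : f m - (a * b / (b - a)) * (∫ x in a..b, f x / x ^ 2)
      = (∫ t in (0:ℝ)..(1/2:ℝ), t * val t) + ∫ t in (1/2:ℝ)..(1:ℝ), (t - 1) * val t := by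
    have hfm : f m = G (1/2) := by
      simp only [hG, intervalIntegral.integral_same, add_zero]
    rw [hfm, hsub_int]
    exact hiden
  have habs : |f m - (a * b / (b - a)) * (∫ x in a..b, f x / x ^ 2)|
      ≤ (∫ t in (0:ℝ)..(1/2:ℝ), |t * val t|) + ∫ t in (1/2:ℝ)..(1:ℝ), |(t - 1) * val t| := by
    rw [hmain]
    refine le_trans (abs_add_le _ _) (add_le_add ?_ ?_)
    · exact intervalIntegral.abs_integral_le_integral_abs (by norm_num)
    · exact intervalIntegral.abs_integral_le_integral_abs (by norm_num)
  -- rewrite the two pieces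
  have hI1eq : (∫ t in (0:ℝ)..(1/2:ℝ), |t * val t|)
      = ∫ t in (0:ℝ)..(1/2:ℝ), t * (|f' (a * b / (t * a + (1 - t) * b))| *
          (a * b * (b - a) / (t * a + (1 - t) * b) ^ 2)) := by
    apply intervalIntegral.integral_congr
    intro t ht
    rw [uIcc_of_le (by norm_num : (0:ℝ) ≤ 1/2)] at ht
    have hd1 : a ≤ t * a + (1 - t) * b := by nlinarith [ht.1, ht.2]
    have hd0 : 0 < t * a + (1 - t) * b := lt_of_lt_of_le ha0 hd1
    simp only [hval, hV, hX, hA]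
    rw [abs_mul, abs_mul, abs_of_nonneg ht.1,
      abs_of_pos (div_pos (by nlinarith [mul_pos ha0 hb0]) (pow_pos hd0 2))]
  have hI2eq : (∫ t in (1/2:ℝ)..(1:ℝ), |(t - 1) * val t|)
      = ∫ t in (0:ℝ)..(1/2:ℝ), t * (|f' (a * b / (t * b + (1 - t) * a))| *
          (a * b * (b - a) / (t * b + (1 - t) * a) ^ 2)) := by
    have hcs := intervalIntegral.integral_comp_sub_left (a := (0:ℝ)) (b := (1/2:ℝ))
      (fun t => |(t - 1) * val t|) 1
    norm_num at hcs
    simp only [← abs_mul] at hcs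
    rw [← hcs]
    apply intervalIntegral.integral_congr
    intro t ht
    rw [uIcc_of_le (by norm_num : (0:ℝ) ≤ 1/2)] at ht
    have hd1 : a ≤ t * b + (1 - t) * a := by nlinarith [ht.1, ht.2]
    have hd0 : 0 < t * b + (1 - t) * a := lt_of_lt_of_le ha0 hd1
    simp only [hval, hV, hX, hA]
    have hker : (1 - t) * a + (1 - (1 - t)) * b = t * b + (1 - t) * a := by ring
    rw [hker]
    rw [abs_mul, abs_mul, abs_of_nonneg ht.1,
      abs_of_pos (div_pos (by nlinarith [mul_pos ha0 hb0]) (pow_pos hd0 2))]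
  -- apply the two half bounds
  have hb1 := half_bound f' a b a b p q ha0 hab hq hpq hconv hmeas1
    le_rfl hab.le hab.le le_rfl rfl rfl
  have hb2 := half_bound f' a b b a p q ha0 hab hq hpq hconv hmeas2
    hab.le le_rfl le_rfl hab.le (by ring) (by ring)
  rw [hI1eq, hI2eq] at habs
  rw [← hm] at hb1 hb2
  have hexp : a * b * (b - a) / 2 *
      (C1p 0 p a b ^ (1/p) * ((|f' m| ^ q + |f' b| ^ q) / 4) ^ (1/q)
        + C1p 0 p b a ^ (1/p) * ((|f' m| ^ q + |f' a| ^ q) / 4) ^ (1/q))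
      = a * b * (b - a) / 2 * (C1p 0 p a b ^ (1/p) * ((|f' m| ^ q + |f' b| ^ q) / 4) ^ (1/q))
        + a * b * (b - a) / 2 * (C1p 0 p b a ^ (1/p) * ((|f' m| ^ q + |f' a| ^ q) / 4) ^ (1/q)) := by
    ring
  linarith [habs, hb1, hb2]
end

section
/- Let 0 < a < b, λ ∈ [0,1], q > 1 and 1/p + 1/q = 1. With H = 2ab/(a+b), A = (a+b)/2, G = √(ab), and L = (b−a)/(ln b − ln a), the following inequality holds: |(1−λ)·H + λ·A − G²/L| ≤ (ab(b−a)/2^{1+1/q})·{ C₁(λ,p;a,b)^{1/p} + C₁(λ,p;b,a)^{1/p} }. -/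
open MeasureTheory Set
open intervalIntegral

lemma holder_side (lam p q u v : ℝ) (hu : 0 < u) (hv : 0 < v)
    (hpq : p.HolderConjugate q) :
    ∫ t in (0:ℝ)..(1/2:ℝ), |lam - 2 * t| / (t * v + (1 - t) * u) ^ 2
      ≤ C1p lam p u v ^ (1/p) * (1/2 : ℝ) ^ ((1:ℝ)/q) := by
  set m := min u v with hm_def
  have hm : 0 < m := lt_min hu hv
  have hden : ∀ t ∈ Ioc (0:ℝ) (1/2:ℝ), m ≤ t * v + (1 - t) * u := by
    intro t ht
    have h1 : 0 ≤ t := ht.1.le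
    have h2 : t ≤ 1 := ht.2.trans (by norm_num)
    have hmu : m ≤ u := min_le_left u v
    have hmv : m ≤ v := min_le_right u v
    nlinarith
  set F : ℝ → ℝ := fun t => |lam - 2 * t| / (t * v + (1 - t) * u) ^ 2 with hF_def
  have hFmeas : Measurable F := by
    apply Measurable.div
    · exact (measurable_const.sub (measurable_id.const_mul 2)).abs
    · exact ((measurable_id.mul_const v).add ((measurable_const.sub measurable_id).mul_const u)).pow_const 2
  set μ : Measure ℝ := volume.restrict (Ioc (0:ℝ) (1/2:ℝ)) with hμ_def
  haveI : IsFiniteMeasure μ := by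
    constructor
    rw [hμ_def, Measure.restrict_apply_univ, Real.volume_Ioc]
    exact ENNReal.ofReal_lt_top
  have hF_mem : MemLp F (ENNReal.ofReal p) μ := by
    apply MemLp.of_bound hFmeas.aestronglyMeasurable ((|lam| + 1) / m ^ 2)
    rw [hμ_def]
    refine (ae_restrict_iff' measurableSet_Ioc).2 (ae_of_all _ fun t ht => ?_)
    have hd : m ≤ t * v + (1 - t) * u := hden t ht
    have hnum : |lam - 2 * t| ≤ |lam| + 1 := by
      have : |lam - 2 * t| ≤ |lam| + |2 * t| := abs_sub _ _
      have h2t : |2 * t| ≤ 1 := by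
        rw [abs_of_nonneg (by linarith [ht.1.le] : (0:ℝ) ≤ 2 * t)]
        linarith [ht.2]
      linarith
    have hFt : F t ≤ (|lam| + 1) / m ^ 2 := by
      apply div_le_div₀ (by positivity) hnum (by positivity)
      exact pow_le_pow_left₀ hm.le hd 2
    rw [Real.norm_eq_abs, abs_of_nonneg (by positivity : (0:ℝ) ≤ F t)]
    exact hFt
  have h1_mem : MemLp (fun _ : ℝ => (1:ℝ)) (ENNReal.ofReal q) μ := memLp_const 1
  have key := integral_mul_le_Lp_mul_Lq_of_nonneg hpq
    (ae_of_all _ fun t => by positivity : 0 ≤ᵐ[μ] F)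
    (ae_of_all _ fun _ => zero_le_one) hF_mem h1_mem
  have e1 : ∫ t, F t * 1 ∂μ = ∫ t in (0:ℝ)..(1/2:ℝ), F t := by
    rw [intervalIntegral.integral_of_le (by norm_num : (0:ℝ) ≤ 1/2)]
    simp [hμ_def]
  have e2 : ∫ _t, (1:ℝ) ^ q ∂μ = 1/2 := by
    simp [hμ_def, Real.one_rpow, Real.volume_Ioc]
  have e3 : ∫ t, F t ^ p ∂μ = C1p lam p u v := by
    rw [C1p, intervalIntegral.integral_of_le (by norm_num : (0:ℝ) ≤ 1/2), hμ_def]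
    refine setIntegral_congr_fun measurableSet_Ioc (fun t ht => ?_)
    have hd : 0 < t * v + (1 - t) * u := lt_of_lt_of_le hm (hden t ht)
    show F t ^ p = |lam - 2 * t| ^ p / (t * v + (1 - t) * u) ^ (2 * p)
    rw [hF_def]
    simp only
    rw [Real.div_rpow (abs_nonneg _) (by positivity), ← Real.rpow_natCast (t * v + (1 - t) * u) 2,
      ← Real.rpow_mul hd.le]
    norm_num
  rw [e1, e2, e3] at key
  exact key

lemma key_id (a b : ℝ) (ha : 0 < a) (hab : a < b) (lam : ℝ) :
    (1 - lam) * (2 * a * b / (a + b)) + lam * ((a + b) / 2)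
      - a * b * (Real.log b - Real.log a) / (b - a)
    = (∫ t in (0:ℝ)..(1/2:ℝ), (t - lam/2) * (-(a * b * (b - a)) / (a + t * (b - a)) ^ 2))
      + ∫ t in (1/2:ℝ)..(1:ℝ), (t - 1 + lam/2) * (-(a * b * (b - a)) / (a + t * (b - a)) ^ 2) := by
  have hb : 0 < b := ha.trans hab
  have hc : 0 < b - a := sub_pos.2 hab
  set φ : ℝ → ℝ := fun t => a * b / (a + t * (b - a)) with hφ_def
  set φ' : ℝ → ℝ := fun t => -(a * b * (b - a)) / (a + t * (b - a)) ^ 2 with hφ'_def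
  have hden : ∀ t : ℝ, 0 ≤ t → 0 < a + t * (b - a) := by intro t ht; nlinarith
  have hderiv : ∀ t : ℝ, 0 ≤ t → HasDerivAt φ (φ' t) t := by
    intro t ht
    have hd : HasDerivAt (fun s : ℝ => a + s * (b - a)) (b - a) t := by
      simpa using ((hasDerivAt_id t).mul_const (b - a)).const_add a
    have := (hasDerivAt_const t (a * b)).div hd (hden t ht).ne'
    refine this.congr_deriv ?_
    simp only [hφ'_def]
    ring
  have hφcont : ContinuousOn φ (Ici 0) := by
    apply ContinuousOn.div continuousOn_const (by fun_prop)
    exact fun x hx => (hden x hx).ne'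
  have hφ'cont : ContinuousOn φ' (Ici 0) := by
    apply ContinuousOn.div continuousOn_const (by fun_prop)
    exact fun x hx => pow_ne_zero 2 (hden x hx).ne'
  have hsub1 : uIcc (0:ℝ) (1/2:ℝ) ⊆ Ici 0 := by
    rw [uIcc_of_le (by norm_num)]; exact fun x hx => hx.1
  have hsub2 : uIcc (1/2:ℝ) (1:ℝ) ⊆ Ici 0 := by
    rw [uIcc_of_le (by norm_num)]; intro x hx; exact le_trans (by norm_num) hx.1
  have hsub3 : uIcc (0:ℝ) (1:ℝ) ⊆ Ici 0 := by
    rw [uIcc_of_le (by norm_num)]; exact fun x hx => hx.1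
  have hint1 : IntervalIntegrable φ volume 0 (1/2) := (hφcont.mono hsub1).intervalIntegrable
  have hint2 : IntervalIntegrable φ volume (1/2) 1 := (hφcont.mono hsub2).intervalIntegrable
  have hint1' : IntervalIntegrable φ' volume 0 (1/2) := (hφ'cont.mono hsub1).intervalIntegrable
  have hint2' : IntervalIntegrable φ' volume (1/2) 1 := (hφ'cont.mono hsub2).intervalIntegrable
  have e1 : ∫ t in (0:ℝ)..(1/2:ℝ), (t - lam/2) * φ' t
      = (1/2 - lam/2) * φ (1/2) - (0 - lam/2) * φ 0 - ∫ t in (0:ℝ)..(1/2:ℝ), φ t := by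
    have := integral_mul_deriv_eq_deriv_mul
      (u := fun t => t - lam/2) (u' := fun _ => 1) (v := φ) (v' := φ')
      (fun x _ => (hasDerivAt_id x).sub_const _)
      (fun x hx => hderiv x (hsub1 hx)) intervalIntegrable_const hint1'
    simpa using this
  have e2 : ∫ t in (1/2:ℝ)..(1:ℝ), (t - 1 + lam/2) * φ' t
      = (1 - 1 + lam/2) * φ 1 - (1/2 - 1 + lam/2) * φ (1/2) - ∫ t in (1/2:ℝ)..(1:ℝ), φ t := by
    have := integral_mul_deriv_eq_deriv_mul
      (u := fun t => t - 1 + lam/2) (u' := fun _ => 1) (v := φ) (v' := φ')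
      (fun x _ => ((hasDerivAt_id x).sub_const 1).add_const _)
      (fun x hx => hderiv x (hsub2 hx)) intervalIntegrable_const hint2'
    simpa using this
  have hlogint : (∫ t in (0:ℝ)..(1:ℝ), φ t) = a * b * (Real.log b - Real.log a) / (b - a) := by
    have hΨ : ∀ t ∈ uIcc (0:ℝ) (1:ℝ),
        HasDerivAt (fun s => a * b / (b - a) * Real.log (a + s * (b - a))) (φ t) t := by
      intro t ht
      have ht0 : (0:ℝ) ≤ t := hsub3 ht
      have hd : HasDerivAt (fun s : ℝ => a + s * (b - a)) (b - a) t := by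
        simpa using ((hasDerivAt_id t).mul_const (b - a)).const_add a
      have := (hd.log (hden t ht0).ne').const_mul (a * b / (b - a))
      refine this.congr_deriv ?_
      rw [hφ_def]
      field_simp
    have := integral_eq_sub_of_hasDerivAt hΨ (hφcont.mono hsub3).intervalIntegrable
    rw [this]
    rw [show a + 1 * (b - a) = b by ring, show a + 0 * (b - a) = a by ring]
    field_simp
  have hadj : (∫ t in (0:ℝ)..(1/2:ℝ), φ t) + ∫ t in (1/2:ℝ)..(1:ℝ), φ t
      = a * b * (Real.log b - Real.log a) / (b - a) := by
    rw [integral_add_adjacent_intervals hint1 hint2, hlogint]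
  rw [e1, e2]
  set I1 := ∫ t in (0:ℝ)..(1/2:ℝ), φ t with hI1
  set I2 := ∫ t in (1/2:ℝ)..(1:ℝ), φ t with hI2
  have hI2' : I2 = a * b * (Real.log b - Real.log a) / (b - a) - I1 := by linarith
  rw [hI2', hφ_def]
  simp only
  have h1 : a + (1/2 : ℝ) * (b - a) = (a + b) / 2 := by ring
  have h2 : a + (0:ℝ) * (b - a) = a := by ring
  have h3 : a + (1:ℝ) * (b - a) = b := by ring
  rw [h1, h2, h3]
  have hab' : (0:ℝ) < a + b := by linarith
  field_simp
  ring

theorem prop_means2 (a b : ℝ) (ha : 0 < a) (hab : a < b)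
    (lam : ℝ) (hlam : lam ∈ Icc (0:ℝ) 1)
    (p q : ℝ) (hq : 1 < q) (hpq : 1 / p + 1 / q = 1) :
    |(1 - lam) * (2 * a * b / (a + b)) + lam * ((a + b) / 2) -
      Real.sqrt (a * b) ^ 2 / ((b - a) / (Real.log b - Real.log a))| ≤
      (a * b * (b - a) / (2:ℝ) ^ (1 + 1 / q)) *
        (C1p lam p a b ^ (1 / p) + C1p lam p b a ^ (1 / p)) := by
  have hb : 0 < b := ha.trans hab
  have hc : 0 < b - a := sub_pos.2 hab
  have hq0 : 0 < q := lt_trans one_pos hq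
  have hinvq1 : 1/q < 1 := (div_lt_one hq0).2 hq
  have hinvq0 : 0 < 1/q := by positivity
  have hp0 : 0 < p := by
    have h : 0 < 1/p := by linarith
    exact one_div_pos.1 h
  have hp1 : 1 < p := by
    have h : 1/p < 1 := by linarith
    exact (div_lt_one hp0).1 h
  have hconj : p.HolderConjugate q := Real.holderConjugate_iff.mpr ⟨hp1, by simpa [one_div] using hpq⟩
  rw [Real.sq_sqrt (by positivity : (0:ℝ) ≤ a * b), div_div_eq_mul_div,
    key_id a b ha hab lam]
  have hb1 : |∫ t in (0:ℝ)..(1/2:ℝ), (t - lam/2) * (-(a * b * (b - a)) / (a + t * (b - a)) ^ 2)|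
      ≤ (a * b * (b - a) / 2) * (C1p lam p a b ^ (1/p) * (1/2 : ℝ) ^ ((1:ℝ)/q)) := by
    have hEq : EqOn
        (fun t => |(t - lam/2) * (-(a * b * (b - a)) / (a + t * (b - a)) ^ 2)|)
        (fun t => (a * b * (b - a) / 2) * (|lam - 2 * t| / (t * b + (1 - t) * a) ^ 2))
        (uIcc (0:ℝ) (1/2:ℝ)) := by
      intro t ht
      rw [uIcc_of_le (by norm_num)] at ht
      have hd : 0 < a + t * (b - a) := by nlinarith [ht.1]
      simp only
      rw [abs_mul, show t - lam/2 = -((lam - 2*t)/2) by ring, abs_neg, abs_div,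
        abs_div, abs_neg, abs_of_pos (by positivity : (0:ℝ) < a * b * (b - a)),
        abs_of_pos (by positivity : (0:ℝ) < (a + t * (b - a)) ^ 2),
        show a + t * (b - a) = t * b + (1 - t) * a by ring]
      rw [abs_of_pos (by norm_num : (0:ℝ) < 2)]
      ring
    calc |∫ t in (0:ℝ)..(1/2:ℝ), (t - lam/2) * (-(a * b * (b - a)) / (a + t * (b - a)) ^ 2)|
        ≤ ∫ t in (0:ℝ)..(1/2:ℝ), |(t - lam/2) * (-(a * b * (b - a)) / (a + t * (b - a)) ^ 2)| :=
          abs_integral_le_integral_abs (by norm_num)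
      _ = ∫ t in (0:ℝ)..(1/2:ℝ), (a * b * (b - a) / 2) * (|lam - 2 * t| / (t * b + (1 - t) * a) ^ 2) :=
          integral_congr hEq
      _ = (a * b * (b - a) / 2) * ∫ t in (0:ℝ)..(1/2:ℝ), |lam - 2 * t| / (t * b + (1 - t) * a) ^ 2 :=
          integral_const_mul _ _
      _ ≤ (a * b * (b - a) / 2) * (C1p lam p a b ^ (1/p) * (1/2 : ℝ) ^ ((1:ℝ)/q)) := by
          exact mul_le_mul_of_nonneg_left (holder_side lam p q a b ha hb hconj) (by positivity)
  have hb2 : |∫ t in (1/2:ℝ)..(1:ℝ), (t - 1 + lam/2) * (-(a * b * (b - a)) / (a + t * (b - a)) ^ 2)|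
      ≤ (a * b * (b - a) / 2) * (C1p lam p b a ^ (1/p) * (1/2 : ℝ) ^ ((1:ℝ)/q)) := by
    have hcomp := intervalIntegral.integral_comp_sub_left (a := 0) (b := 1/2)
      (fun t => (t - 1 + lam/2) * (-(a * b * (b - a)) / (a + t * (b - a)) ^ 2)) 1
    rw [show (1:ℝ) - 1/2 = 1/2 by norm_num, show (1:ℝ) - 0 = 1 by norm_num] at hcomp
    rw [← hcomp]
    have hEq : EqOn
        (fun x => |(1 - x - 1 + lam/2) * (-(a * b * (b - a)) / (a + (1 - x) * (b - a)) ^ 2)|)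
        (fun x => (a * b * (b - a) / 2) * (|lam - 2 * x| / (x * a + (1 - x) * b) ^ 2))
        (uIcc (0:ℝ) (1/2:ℝ)) := by
      intro x hx
      rw [uIcc_of_le (by norm_num)] at hx
      have hx1 : x ≤ 1 := hx.2.trans (by norm_num)
      have hd : 0 < a + (1 - x) * (b - a) := by nlinarith [hx.1]
      simp only
      rw [abs_mul, show 1 - x - 1 + lam/2 = (lam - 2*x)/2 by ring, abs_div,
        abs_div, abs_neg, abs_of_pos (by positivity : (0:ℝ) < a * b * (b - a)),
        abs_of_pos (by positivity : (0:ℝ) < (a + (1 - x) * (b - a)) ^ 2),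
        show a + (1 - x) * (b - a) = x * a + (1 - x) * b by ring]
      rw [abs_of_pos (by norm_num : (0:ℝ) < 2)]
      ring
    calc |∫ x in (0:ℝ)..(1/2:ℝ), (1 - x - 1 + lam/2) * (-(a * b * (b - a)) / (a + (1 - x) * (b - a)) ^ 2)|
        ≤ ∫ x in (0:ℝ)..(1/2:ℝ), |(1 - x - 1 + lam/2) * (-(a * b * (b - a)) / (a + (1 - x) * (b - a)) ^ 2)| :=
          abs_integral_le_integral_abs (by norm_num)
      _ = ∫ x in (0:ℝ)..(1/2:ℝ), (a * b * (b - a) / 2) * (|lam - 2 * x| / (x * a + (1 - x) * b) ^ 2) :=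
          integral_congr hEq
      _ = (a * b * (b - a) / 2) * ∫ x in (0:ℝ)..(1/2:ℝ), |lam - 2 * x| / (x * a + (1 - x) * b) ^ 2 :=
          integral_const_mul _ _
      _ ≤ (a * b * (b - a) / 2) * (C1p lam p b a ^ (1/p) * (1/2 : ℝ) ^ ((1:ℝ)/q)) := by
          exact mul_le_mul_of_nonneg_left (holder_side lam p q b a hb ha hconj) (by positivity)
  calc |(∫ t in (0:ℝ)..(1/2:ℝ), (t - lam/2) * (-(a * b * (b - a)) / (a + t * (b - a)) ^ 2))
        + ∫ t in (1/2:ℝ)..(1:ℝ), (t - 1 + lam/2) * (-(a * b * (b - a)) / (a + t * (b - a)) ^ 2)|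
      ≤ _ + _ := abs_add_le _ _
    _ ≤ (a * b * (b - a) / 2) * (C1p lam p a b ^ (1/p) * (1/2 : ℝ) ^ ((1:ℝ)/q))
        + (a * b * (b - a) / 2) * (C1p lam p b a ^ (1/p) * (1/2 : ℝ) ^ ((1:ℝ)/q)) := add_le_add hb1 hb2
    _ = (a * b * (b - a) / (2:ℝ) ^ (1 + 1 / q)) *
        (C1p lam p a b ^ (1 / p) + C1p lam p b a ^ (1 / p)) := by
        rw [show ((1:ℝ)/2) ^ ((1:ℝ)/q) = 1 / (2:ℝ) ^ ((1:ℝ)/q) by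
            rw [Real.div_rpow zero_le_one (by norm_num), Real.one_rpow],
          show (2:ℝ) ^ (1 + 1/q) = 2 * (2:ℝ) ^ (1/q) by
            rw [Real.rpow_add two_pos, Real.rpow_one]]
        have h2q : (0:ℝ) < (2:ℝ) ^ ((1:ℝ)/q) := Real.rpow_pos_of_pos two_pos _
        field_simp
end

section
/- Let 0 < a < b, λ ∈ [0,1], q > 1 and 1/p + 1/q = 1. With H = 2ab/(a+b), G = √(ab), and A(x,y) = (x+y)/2, the following inequality holds: |(1−λ)·H² + λ·A(a²,b²) − G²| ≤ (ab(b−a)/2^{1/q})·{ C₁(λ,p;a,b)^{1/p}·A(H^q, b^q)^{1/q} + C₁(λ,p;b,a)^{1/p}·A(a^q, H^q)^{1/q} }. -/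
open MeasureTheory Set

lemma inv_convex_comb {x y s : ℝ} (hx : 0 < x) (hy : 0 < y) (hs0 : 0 ≤ s) (hs1 : s ≤ 1) :
    ((1 - s) * x + s * y)⁻¹ ≤ (1 - s) * x⁻¹ + s * y⁻¹ := by
  have hw : 0 < (1 - s) * x + s * y := by
    rcases lt_or_ge s 1 with h | h
    · nlinarith [mul_pos (by linarith : (0:ℝ) < 1 - s) hx, mul_nonneg hs0 hy.le]
    · have hs : s = 1 := le_antisymm hs1 h
      subst hs; simpa using hy
  have h2 : (1 - s) * x⁻¹ + s * y⁻¹ = ((1 - s) * y + s * x) / (x * y) := by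
    field_simp
  rw [h2, inv_eq_one_div, div_le_div_iff₀ hw (mul_pos hx hy)]
  nlinarith [mul_nonneg (mul_nonneg hs0 (sub_nonneg.2 hs1)) (sq_nonneg (x - y))]

lemma key_holder (X Y lam p q : ℝ) (hX : 0 < X) (hY : 0 < Y)
    (hlam0 : 0 ≤ lam) (hlam1 : lam ≤ 1) (hpq : Real.HolderConjugate p q) :
    (∫ t in (0:ℝ)..(1/2:ℝ), |lam - 2 * t| / (t * Y + (1 - t) * X) ^ 3) ≤
      (∫ t in (0:ℝ)..(1/2:ℝ),
          |lam - 2 * t| ^ p / (t * Y + (1 - t) * X) ^ (2 * p)) ^ (1/p) *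
        ((Y ^ q + (2 * X * Y / (X + Y)) ^ q) / 2) ^ (1/q) / (X * Y * (2:ℝ) ^ (1/q)) := by
  have hq1 : 1 < q := hpq.symm.lt
  have hq0 : 0 < q := hpq.symm.pos
  set w : ℝ → ℝ := fun t => t * Y + (1 - t) * X with hwdef
  have hwc : Continuous w := by fun_prop
  have hwpos : ∀ t ∈ Icc (0:ℝ) (1/2:ℝ), X / 2 ≤ w t := by
    intro t ht
    have := ht.1; have := ht.2
    simp only [hwdef]
    nlinarith [mul_nonneg ht.1 hY.le]
  have hIoc : Ioc (0:ℝ) (1/2:ℝ) ⊆ Icc (0:ℝ) (1/2:ℝ) := Ioc_subset_Icc_self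
  have hX2 : (0:ℝ) < X / 2 := by linarith
  set μ := volume.restrict (Ioc (0:ℝ) (1/2:ℝ)) with hμ
  haveI : IsFiniteMeasure μ := by
    constructor
    rw [hμ, Measure.restrict_apply_univ, Real.volume_Ioc]
    exact ENNReal.ofReal_lt_top
  set f : ℝ → ℝ := fun t => |lam - 2 * t| / (w t) ^ 2 with hfdef
  set g : ℝ → ℝ := fun t => (w t)⁻¹ with hgdef
  have hfm : AEStronglyMeasurable f μ := by
    apply Measurable.aestronglyMeasurable
    fun_prop
  have hgm : AEStronglyMeasurable g μ := by
    apply Measurable.aestronglyMeasurable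
    fun_prop
  have habs : ∀ t ∈ Icc (0:ℝ) (1/2:ℝ), |lam - 2 * t| ≤ 1 := by
    intro t ht
    rw [abs_le]
    constructor <;> nlinarith [ht.1, ht.2]
  have hfb : ∀ t ∈ Icc (0:ℝ) (1/2:ℝ), f t ≤ (X/2)⁻¹ ^ 2 := by
    intro t ht
    have hw := hwpos t ht
    have : f t ≤ 1 / (X/2) ^ 2 := by
      apply div_le_div₀ (by positivity) (habs t ht) (by positivity)
      exact pow_le_pow_left₀ hX2.le hw 2
    simpa [one_div, ← inv_pow] using this
  have hgb : ∀ t ∈ Icc (0:ℝ) (1/2:ℝ), g t ≤ (X/2)⁻¹ := by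
    intro t ht
    exact inv_anti₀ hX2 (hwpos t ht)
  have hf0 : ∀ t, 0 ≤ f t := fun t => by positivity
  have hg0 : ∀ t ∈ Icc (0:ℝ) (1/2:ℝ), 0 ≤ g t := by
    intro t ht
    have h := hwpos t ht
    exact inv_nonneg.2 (le_trans hX2.le h)
  have hmemf : MemLp f (ENNReal.ofReal p) μ := by
    apply MemLp.of_bound hfm ((X/2)⁻¹ ^ 2)
    rw [hμ, ae_restrict_iff' measurableSet_Ioc]
    filter_upwards with t ht
    rw [Real.norm_eq_abs, abs_of_nonneg (hf0 t)]
    exact hfb t (hIoc ht)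
  have hmemg : MemLp g (ENNReal.ofReal q) μ := by
    apply MemLp.of_bound hgm ((X/2)⁻¹)
    rw [hμ, ae_restrict_iff' measurableSet_Ioc]
    filter_upwards with t ht
    rw [Real.norm_eq_abs, abs_of_nonneg (hg0 t (hIoc ht))]
    exact hgb t (hIoc ht)
  have holder :
      ∫ t, f t * g t ∂μ ≤ (∫ t, f t ^ p ∂μ) ^ (1/p) * (∫ t, g t ^ q ∂μ) ^ (1/q) :=
    integral_mul_le_Lp_mul_Lq_of_nonneg hpq
      (Filter.Eventually.of_forall hf0)
      (by rw [hμ, Filter.EventuallyLE, ae_restrict_iff' measurableSet_Ioc]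
          filter_upwards with t ht; exact hg0 t (hIoc ht))
      hmemf hmemg
  set H' : ℝ := 2 * X * Y / (X + Y) with hH'
  have hH'pos : 0 < H' := by rw [hH']; positivity
  clear_value H'
  have hXY : 0 < X * Y := mul_pos hX hY
  -- LHS equals ∫ f * g
  have hL : (∫ t in (0:ℝ)..(1/2:ℝ), |lam - 2 * t| / (w t) ^ 3) = ∫ t, f t * g t ∂μ := by
    rw [intervalIntegral.integral_of_le (by norm_num : (0:ℝ) ≤ 1/2), hμ]
    apply setIntegral_congr_fun measurableSet_Ioc
    intro t ht
    have hw : 0 < w t := lt_of_lt_of_le hX2 (hwpos t (hIoc ht))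
    simp only [hfdef, hgdef]
    rw [show (w t)^3 = (w t)^2 * w t by ring, ← div_div, div_eq_mul_inv]
  -- ∫ f^p equals the C1p-style integral
  have hFp : (∫ t, f t ^ p ∂μ)
      = ∫ t in (0:ℝ)..(1/2:ℝ), |lam - 2 * t| ^ p / (w t) ^ (2 * p) := by
    rw [intervalIntegral.integral_of_le (by norm_num : (0:ℝ) ≤ 1/2), hμ]
    apply setIntegral_congr_fun measurableSet_Ioc
    intro t ht
    have hw : 0 < w t := lt_of_lt_of_le hX2 (hwpos t (hIoc ht))
    simp only [hfdef]
    rw [Real.div_rpow (abs_nonneg _) (by positivity), ← Real.rpow_natCast (w t) 2,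
      ← Real.rpow_mul hw.le]
    norm_num
  -- bound on ∫ g^q
  have hgq_bound : (∫ t, g t ^ q ∂μ)
      ≤ ((Y ^ q + H' ^ q) / 4) / (X * Y) ^ q := by
    have hptwise : ∀ t ∈ Ioc (0:ℝ) (1/2:ℝ),
        g t ^ q ≤ ((1 - 2*t) * Y ^ q + (2*t) * H' ^ q) / (X * Y) ^ q := by
      intro t ht
      have ht' := hIoc ht
      have hw : 0 < w t := lt_of_lt_of_le hX2 (hwpos t ht')
      have hs0 : (0:ℝ) ≤ 2*t := by linarith [ht'.1]
      have hs1 : 2*t ≤ 1 := by linarith [ht'.2]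
      have hmid : (0:ℝ) < (X + Y)/2 := by linarith
      have hinv : (w t)⁻¹ ≤ (1 - 2*t) * X⁻¹ + (2*t) * ((X + Y)/2)⁻¹ := by
        have hcomb : w t = (1 - 2*t) * X + (2*t) * ((X + Y)/2) := by
          simp only [hwdef]; ring
        rw [hcomb]
        exact inv_convex_comb hX hmid hs0 hs1
      have hmul : X * Y * (w t)⁻¹ ≤ (1 - 2*t) * Y + (2*t) * H' := by
        have h2 : X * Y * ((1 - 2*t) * X⁻¹ + (2*t) * ((X + Y)/2)⁻¹)
            = (1 - 2*t) * Y + (2*t) * H' := by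
          rw [hH']; field_simp
        calc X * Y * (w t)⁻¹ ≤ X * Y * ((1 - 2*t) * X⁻¹ + (2*t) * ((X + Y)/2)⁻¹) := by
              exact mul_le_mul_of_nonneg_left hinv hXY.le
          _ = (1 - 2*t) * Y + (2*t) * H' := h2
      have hg0' : 0 ≤ g t := hg0 t ht'
      have hgq : g t ^ q = (X * Y * g t) ^ q / (X * Y) ^ q := by
        rw [Real.mul_rpow hXY.le hg0']
        field_simp
      rw [hgq]
      gcongr ?_ / _
      calc (X * Y * g t) ^ q ≤ ((1 - 2*t) * Y + (2*t) * H') ^ q := by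
            apply Real.rpow_le_rpow (by positivity) ?_ hq0.le
            simpa [hgdef] using hmul
        _ ≤ (1 - 2*t) * Y ^ q + (2*t) * H' ^ q := by
            have hcv := (convexOn_rpow (le_of_lt hq1)).2 (mem_Ici.2 hY.le)
              (mem_Ici.2 hH'pos.le) (by linarith : (0:ℝ) ≤ 1 - 2*t) hs0 (by ring)
            simpa [smul_eq_mul] using hcv
    -- integrate the pointwise bound
    have hint1 : IntegrableOn (fun t => g t ^ q) (Ioc (0:ℝ) (1/2:ℝ)) volume := by
      rw [IntegrableOn, ← memLp_one_iff_integrable]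
      apply MemLp.of_bound (μ := μ) ?_ (((X/2)⁻¹) ^ q)
      · rw [hμ, ae_restrict_iff' measurableSet_Ioc]
        filter_upwards with t ht
        have ht' := hIoc ht
        rw [Real.norm_eq_abs, abs_of_nonneg (Real.rpow_nonneg (hg0 t ht') q)]
        exact Real.rpow_le_rpow (hg0 t ht') (hgb t ht') hq0.le
      · apply Measurable.aestronglyMeasurable
        fun_prop
    have hint2 : IntegrableOn
        (fun t => ((1 - 2*t) * Y ^ q + (2*t) * H' ^ q) / (X * Y) ^ q)
        (Ioc (0:ℝ) (1/2:ℝ)) volume := by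
      exact Continuous.integrableOn_Ioc (by fun_prop)
    have hmono := setIntegral_mono_on hint1 hint2 measurableSet_Ioc hptwise
    have hcomp : (∫ t in Ioc (0:ℝ) (1/2:ℝ),
        ((1 - 2*t) * Y ^ q + (2*t) * H' ^ q) / (X * Y) ^ q)
        = ((Y ^ q + H' ^ q) / 4) / (X * Y) ^ q := by
      rw [← intervalIntegral.integral_of_le (by norm_num : (0:ℝ) ≤ 1/2)]
      have hfun : ∀ t ∈ uIcc (0:ℝ) (1/2:ℝ),
          ((1 - 2*t) * Y ^ q + (2*t) * H' ^ q) / (X * Y) ^ q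
          = Y ^ q / (X*Y) ^ q + t * ((2 * H' ^ q - 2 * Y ^ q) / (X*Y) ^ q) := by
        intro t _; ring
      rw [intervalIntegral.integral_congr hfun]
      rw [intervalIntegral.integral_add (intervalIntegrable_const)
        (intervalIntegral.intervalIntegrable_id.mul_const _)]
      rw [intervalIntegral.integral_mul_const, integral_id,
        intervalIntegral.integral_const]
      simp only [smul_eq_mul]
      ring
    rw [hμ]
    exact hmono.trans (le_of_eq hcomp)
  -- assemble
  rw [hL]
  calc (∫ t, f t * g t ∂μ)
      ≤ (∫ t, f t ^ p ∂μ) ^ (1/p) * (∫ t, g t ^ q ∂μ) ^ (1/q) := holder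
    _ ≤ (∫ t, f t ^ p ∂μ) ^ (1/p) * (((Y ^ q + H' ^ q) / 4) / (X * Y) ^ q) ^ (1/q) := by
        have hint_nonneg : 0 ≤ ∫ t, g t ^ q ∂μ := by
          rw [hμ]
          exact setIntegral_nonneg measurableSet_Ioc
            (fun t ht => Real.rpow_nonneg (hg0 t (hIoc ht)) q)
        have h2 : (∫ t, g t ^ q ∂μ) ^ (1/q)
            ≤ (((Y ^ q + H' ^ q) / 4) / (X * Y) ^ q) ^ (1/q) :=
          Real.rpow_le_rpow hint_nonneg hgq_bound (by positivity)
        exact mul_le_mul_of_nonneg_left h2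
          (Real.rpow_nonneg (integral_nonneg (fun t => Real.rpow_nonneg (hf0 t) p)) _)
    _ = (∫ t in (0:ℝ)..(1/2:ℝ), |lam - 2 * t| ^ p / (w t) ^ (2 * p)) ^ (1/p) *
        ((Y ^ q + H' ^ q) / 2) ^ (1/q) / (X * Y * (2:ℝ) ^ (1/q)) := by
        rw [hFp]
        have hS : (0:ℝ) ≤ Y ^ q + H' ^ q := by positivity
        have h4 : ((Y ^ q + H' ^ q) / 4) / (X * Y) ^ q
            = ((Y ^ q + H' ^ q) / 2) / (2 * (X * Y) ^ q) := by ring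
        rw [h4, Real.div_rpow (by linarith) (by positivity),
          Real.mul_rpow (by norm_num) (by positivity),
          ← Real.rpow_mul hXY.le, mul_one_div, div_self hq0.ne', Real.rpow_one]
        ring


set_option maxHeartbeats 2000000 in
theorem prop_means5 (a b : ℝ) (ha : 0 < a) (hab : a < b)
    (lam : ℝ) (hlam : lam ∈ Icc (0:ℝ) 1)
    (p q : ℝ) (hq : 1 < q) (hpq : 1 / p + 1 / q = 1) :
    |(1 - lam) * (2 * a * b / (a + b)) ^ 2 + lam * ((a ^ 2 + b ^ 2) / 2) -
      Real.sqrt (a * b) ^ 2| ≤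
      (a * b * (b - a) / (2:ℝ) ^ (1 / q)) *
        (C1p lam p a b ^ (1 / p) *
            (((2 * a * b / (a + b)) ^ q + b ^ q) / 2) ^ (1 / q)
          + C1p lam p b a ^ (1 / p) *
            ((a ^ q + (2 * a * b / (a + b)) ^ q) / 2) ^ (1 / q)) := by
  obtain ⟨hlam0, hlam1⟩ := hlam
  have hb : 0 < b := lt_trans ha hab
  have hab2 : 0 < a + b := by linarith
  have hc : 0 < b - a := by linarith
  have hm : 0 < a * b := mul_pos ha hb
  have hq0 : 0 < q := lt_trans one_pos hq
  have h1q : 1/q < 1 := by rw [div_lt_one hq0]; exact hq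
  have h1q0 : 0 < 1/q := by positivity
  have h1p : 0 < 1/p := by linarith
  have hp0 : 0 < p := by
    rcases lt_trichotomy p 0 with h | h | h
    · have : 1/p < 0 := div_neg_of_pos_of_neg one_pos h
      linarith
    · rw [h] at h1p; norm_num at h1p
    · exact h
  have hp1 : 1 < p := (div_lt_one hp0).mp (by linarith)
  have hpq' : Real.HolderConjugate p q := Real.holderConjugate_iff.mpr ⟨hp1, by simpa [one_div] using hpq⟩
  have h2q : (0:ℝ) < (2:ℝ) ^ (1/q) := Real.rpow_pos_of_pos (by norm_num) _
  rw [Real.sq_sqrt hm.le]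
  -- the linear path and the function g
  set L : ℝ → ℝ := fun t => t * b + (1 - t) * a with hLdef
  have hLcont : Continuous L := by fun_prop
  have hLderiv : ∀ t : ℝ, HasDerivAt L (b - a) t := by
    intro t
    have h1 : HasDerivAt (fun t : ℝ => t * b + (1 - t) * a) (1 * b + (0 - 1) * a) t :=
      ((hasDerivAt_id t).mul_const b).add
        (((hasDerivAt_const t 1).sub (hasDerivAt_id t)).mul_const a)
    convert h1 using 1; ring
  have hLpos : ∀ t ∈ Icc (0:ℝ) 1, 0 < L t := by
    intro t ht
    simp only [hLdef]
    nlinarith [ht.1, ht.2, mul_nonneg ht.1 hc.le]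
  set g : ℝ → ℝ := fun t => (a*b)^2 / (L t)^2 with hgdef
  set g' : ℝ → ℝ := fun t => -(2 * (a*b)^2 * (b - a)) / (L t)^3 with hg'def
  have hgderiv : ∀ t ∈ Icc (0:ℝ) 1, HasDerivAt g (g' t) t := by
    intro t ht
    have hL := hLpos t ht
    have h2 : HasDerivAt (fun t => (L t)^2) (2 * (L t)^(2-1) * (b-a)) t := by
      exact_mod_cast (hLderiv t).pow 2
    have h3 := (hasDerivAt_const t ((a*b)^2)).div h2 (by positivity)
    exact h3.congr_deriv (by
    simp only [hg'def]
    field_simp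
    ring)
  have hgcont : ContinuousOn g (Icc (0:ℝ) 1) := by
    apply ContinuousOn.div continuousOn_const ((hLcont.continuousOn).pow 2)
    exact fun t ht => pow_ne_zero 2 (hLpos t ht).ne'
  have hg'cont : ContinuousOn g' (Icc (0:ℝ) 1) := by
    apply ContinuousOn.div continuousOn_const ((hLcont.continuousOn).pow 3)
    exact fun t ht => pow_ne_zero 3 (hLpos t ht).ne'
  have hsub1 : uIcc (0:ℝ) (1/2:ℝ) ⊆ Icc (0:ℝ) 1 := by
    rw [uIcc_of_le (by norm_num)]
    exact Icc_subset_Icc le_rfl (by norm_num)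
  have hsub2 : uIcc (1/2:ℝ) (1:ℝ) ⊆ Icc (0:ℝ) 1 := by
    rw [uIcc_of_le (by norm_num)]
    exact Icc_subset_Icc (by norm_num) le_rfl
  have hgint1 : IntervalIntegrable g volume 0 (1/2) :=
    (hgcont.mono hsub1).intervalIntegrable
  have hgint2 : IntervalIntegrable g volume (1/2) 1 :=
    (hgcont.mono hsub2).intervalIntegrable
  -- integration by parts on the two halves
  have hibp1 : ∫ t in (0:ℝ)..(1/2:ℝ), (t - lam/2) * g' t
      = (1/2 - lam/2) * g (1/2) - (0 - lam/2) * g 0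
        - ∫ t in (0:ℝ)..(1/2:ℝ), 1 * g t := by
    apply intervalIntegral.integral_mul_deriv_eq_deriv_mul
    · intro x _; simpa using (hasDerivAt_id x).sub_const (lam/2)
    · intro x hx; exact hgderiv x (hsub1 hx)
    · exact intervalIntegrable_const
    · exact (hg'cont.mono hsub1).intervalIntegrable
  have hibp2 : ∫ t in (1/2:ℝ)..(1:ℝ), (t - (1 - lam/2)) * g' t
      = (1 - (1 - lam/2)) * g 1 - (1/2 - (1 - lam/2)) * g (1/2)
        - ∫ t in (1/2:ℝ)..(1:ℝ), 1 * g t := by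
    apply intervalIntegral.integral_mul_deriv_eq_deriv_mul
    · intro x _; simpa using (hasDerivAt_id x).sub_const (1 - lam/2)
    · intro x hx; exact hgderiv x (hsub2 hx)
    · exact intervalIntegrable_const
    · exact (hg'cont.mono hsub2).intervalIntegrable
  -- total integral of g
  have hint01 : (∫ t in (0:ℝ)..(1:ℝ), g t) = a * b := by
    have hF : ∀ t ∈ uIcc (0:ℝ) (1:ℝ),
        HasDerivAt (fun t => -((a*b)^2) / ((b-a) * L t)) (g t) t := by
      intro t ht
      rw [uIcc_of_le (by norm_num)] at ht
      have hL := hLpos t ht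
      have h2 : HasDerivAt (fun t => (b-a) * L t) ((b-a) * (b-a)) t :=
        ((hLderiv t).const_mul (b-a))
      have h3 := (hasDerivAt_const t (-((a*b)^2))).div h2 (by positivity)
      exact h3.congr_deriv (by
      simp only [hgdef]
      field_simp
      ring)
    rw [intervalIntegral.integral_eq_sub_of_hasDerivAt hF
      ((hgcont.mono (by rw [uIcc_of_le (by norm_num)])).intervalIntegrable)]
    have hL1 : L 1 = b := by simp [hLdef]
    have hL0 : L 0 = a := by simp [hLdef]
    rw [hL1, hL0]
    field_simp
    ring
  have hsplit : (∫ t in (0:ℝ)..(1/2:ℝ), g t) + ∫ t in (1/2:ℝ)..(1:ℝ), g t = a * b := by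
    rw [intervalIntegral.integral_add_adjacent_intervals hgint1 hgint2]
    exact hint01
  -- values of g
  have hg0v : g 0 = b^2 := by
    simp only [hgdef, hLdef]
    norm_num
    field_simp
  have hg1v : g 1 = a^2 := by
    simp only [hgdef, hLdef]
    norm_num
    field_simp
  have hghv : g (1/2) = (2*a*b/(a+b))^2 := by
    simp only [hgdef, hLdef]
    have hd : ((1:ℝ)/2 * b + (1 - 1/2) * a) ≠ 0 := by
      intro h; nlinarith
    field_simp
    ring
  -- the identity
  have hID : (1 - lam) * (2*a*b/(a+b))^2 + lam * ((a^2+b^2)/2) - a*b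
      = (∫ t in (0:ℝ)..(1/2:ℝ), (t - lam/2) * g' t)
        + ∫ t in (1/2:ℝ)..(1:ℝ), (t - (1 - lam/2)) * g' t := by
    rw [hibp1, hibp2]
    simp only [one_mul]
    rw [hg0v, hg1v, hghv]
    linarith [hsplit]
  -- apply the key Hölder lemma on both halves
  have hK1 := key_holder a b lam p q ha hb hlam0 hlam1 hpq'
  have hK2 := key_holder b a lam p q hb ha hlam0 hlam1 hpq'
  rw [show b ^ q + (2 * a * b / (a + b)) ^ q = (2 * a * b / (a + b)) ^ q + b ^ q
    from add_comm _ _] at hK1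
  rw [show 2 * b * a / (b + a) = 2 * a * b / (a + b) by ring,
    show b * a = a * b by ring] at hK2
  -- bound |I1|
  have habs1 : |∫ t in (0:ℝ)..(1/2:ℝ), (t - lam/2) * g' t|
      ≤ (a*b)^2 * (b-a)
        * ∫ t in (0:ℝ)..(1/2:ℝ), |lam - 2 * t| / (t * b + (1 - t) * a)^3 := by
    refine (intervalIntegral.abs_integral_le_integral_abs (by norm_num)).trans
      (le_of_eq ?_)
    rw [← intervalIntegral.integral_const_mul]
    apply intervalIntegral.integral_congr
    intro t ht
    have hL : 0 < t * b + (1 - t) * a := by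
      have := hLpos t (hsub1 ht); simpa [hLdef] using this
    have h2 : |lam - 2*t| = 2 * |t - lam/2| := by
      rw [abs_sub_comm, show 2*t - lam = 2*(t - lam/2) by ring, abs_mul,
        abs_of_pos (by norm_num : (0:ℝ) < 2)]
    show |(t - lam/2) * g' t| = _
    simp only [hg'def, hLdef]
    rw [abs_mul, abs_div, abs_neg,
      abs_of_pos (show (0:ℝ) < 2*(a*b)^2*(b-a) by positivity),
      abs_of_pos (pow_pos hL 3), h2]
    field_simp
  -- bound |I2| after reflecting the interval
  have hflip : (∫ t in (1/2:ℝ)..(1:ℝ), |(t - (1 - lam/2)) * g' t|)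
      = ∫ s in (0:ℝ)..(1/2:ℝ), |((1-s) - (1 - lam/2)) * g' (1-s)| := by
    have h := (intervalIntegral.integral_comp_sub_left (a := 0) (b := 1/2)
      (fun t => |(t - (1 - lam/2)) * g' t|) 1).symm
    have e1 : (1:ℝ) - 1/2 = 1/2 := by norm_num
    have e2 : (1:ℝ) - 0 = 1 := by norm_num
    rw [e1, e2] at h
    exact h
  have habs2 : |∫ t in (1/2:ℝ)..(1:ℝ), (t - (1 - lam/2)) * g' t|
      ≤ (a*b)^2 * (b-a)
        * ∫ t in (0:ℝ)..(1/2:ℝ), |lam - 2 * t| / (t * a + (1 - t) * b)^3 := by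
    refine (intervalIntegral.abs_integral_le_integral_abs (by norm_num)).trans
      (le_of_eq ?_)
    rw [hflip, ← intervalIntegral.integral_const_mul]
    apply intervalIntegral.integral_congr
    intro s hs
    rw [uIcc_of_le (by norm_num)] at hs
    have hL : 0 < s * a + (1 - s) * b := by
      nlinarith [mul_nonneg hs.1 ha.le,
        mul_pos (show (0:ℝ) < 1 - s by linarith [hs.2]) hb]
    have hLeq : L (1 - s) = s * a + (1 - s) * b := by
      simp only [hLdef]; ring
    have h2 : |lam - 2*s| = 2 * |(1-s) - (1 - lam/2)| := by
      rw [show (1-s) - (1 - lam/2) = lam/2 - s by ring, abs_sub_comm lam (2*s),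
        show 2*s - lam = 2*(s - lam/2) by ring, abs_mul,
        abs_of_pos (by norm_num : (0:ℝ) < 2), abs_sub_comm s (lam/2)]
    show |((1-s) - (1 - lam/2)) * g' (1-s)| = _
    simp only [hg'def]
    rw [hLeq, abs_mul, abs_div, abs_neg,
      abs_of_pos (show (0:ℝ) < 2*(a*b)^2*(b-a) by positivity),
      abs_of_pos (pow_pos hL 3), h2]
    field_simp
  -- assemble everything
  unfold C1p
  calc |(1 - lam) * (2 * a * b / (a + b)) ^ 2 + lam * ((a ^ 2 + b ^ 2) / 2) - a * b|
      = |(∫ t in (0:ℝ)..(1/2:ℝ), (t - lam/2) * g' t)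
          + ∫ t in (1/2:ℝ)..(1:ℝ), (t - (1 - lam/2)) * g' t| := by rw [← hID]
    _ ≤ |∫ t in (0:ℝ)..(1/2:ℝ), (t - lam/2) * g' t|
          + |∫ t in (1/2:ℝ)..(1:ℝ), (t - (1 - lam/2)) * g' t| := abs_add_le _ _
    _ ≤ (a*b)^2 * (b-a)
          * (∫ t in (0:ℝ)..(1/2:ℝ), |lam - 2 * t| / (t * b + (1 - t) * a)^3)
        + (a*b)^2 * (b-a)
          * ∫ t in (0:ℝ)..(1/2:ℝ), |lam - 2 * t| / (t * a + (1 - t) * b)^3 :=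
        add_le_add habs1 habs2
    _ ≤ (a*b)^2 * (b-a)
          * ((∫ t in (0:ℝ)..(1/2:ℝ),
              |lam - 2 * t| ^ p / (t * b + (1 - t) * a) ^ (2 * p)) ^ (1/p) *
            (((2 * a * b / (a + b)) ^ q + b ^ q) / 2) ^ (1/q) / (a * b * (2:ℝ) ^ (1/q)))
        + (a*b)^2 * (b-a)
          * ((∫ t in (0:ℝ)..(1/2:ℝ),
              |lam - 2 * t| ^ p / (t * a + (1 - t) * b) ^ (2 * p)) ^ (1/p) *
            ((a ^ q + (2 * a * b / (a + b)) ^ q) / 2) ^ (1/q) / (a * b * (2:ℝ) ^ (1/q))) :=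
        add_le_add (mul_le_mul_of_nonneg_left hK1 (by positivity))
          (mul_le_mul_of_nonneg_left hK2 (by positivity))
    _ = (a * b * (b - a) / (2:ℝ) ^ (1 / q)) *
        ((∫ t in (0:ℝ)..(1/2:ℝ),
            |lam - 2 * t| ^ p / (t * b + (1 - t) * a) ^ (2 * p)) ^ (1 / p) *
            (((2 * a * b / (a + b)) ^ q + b ^ q) / 2) ^ (1 / q)
          + (∫ t in (0:ℝ)..(1/2:ℝ),
            |lam - 2 * t| ^ p / (t * a + (1 - t) * b) ^ (2 * p)) ^ (1 / p) *
            ((a ^ q + (2 * a * b / (a + b)) ^ q) / 2) ^ (1 / q)) := by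
        field_simp
end
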